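/- Let n be a positive integer, q a prime power with gcd(n,q)=1, m = ord_n(q), and q^⌊m/2⌋ < n ≤ q^m - 1. If x and y are distinct integers in the range 1 ≤ x, y ≤ min{⌊n·q^⌈m/2⌉/(q^m−1) − 1⌋, n−1} with x ≢ 0 (mod q) and y ≢ 0 (mod q), then the q-ary cyclotomic cosets C_x and C_y modulo n are disjoint. -/

import Mathlib

-- key arithmetic lemma
lemma key_lt (n q m e x a : ℕ) (hq2 : 2 ≤ q) (hn : 0 < n) (ha : 1 ≤ a)
    (hea : e + a ≤ m) (hhigh : n ≤ q ^ m - 1)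
    (hx : (x : ℝ) ≤ (n : ℝ) * (q : ℝ) ^ e / ((q : ℝ) ^ m - 1) - 1) :
    x * q ^ a < n := by
  have hm1 : 1 ≤ m := le_trans (by omega) hea
  have hq1 : (1:ℝ) ≤ (q:ℝ) := by exact_mod_cast (by omega : 1 ≤ q)
  have hQ : (2:ℝ) ≤ (q:ℝ) ^ m := by
    calc (2:ℝ) ≤ (q:ℝ) := by exact_mod_cast hq2
    _ ≤ (q:ℝ)^m := le_self_pow₀ (by linarith) (by omega)
  have hQ1 : (0:ℝ) < (q:ℝ)^m - 1 := by linarith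
  have hn' : (n:ℝ) ≤ (q:ℝ)^m - 1 := by
    have h1 : (1:ℕ) ≤ q ^ m := Nat.one_le_pow _ _ (by omega)
    have := (Nat.cast_le (α := ℝ)).2 hhigh
    rwa [Nat.cast_sub h1, Nat.cast_pow, Nat.cast_one] at this
  have hqa : (2:ℝ) ≤ (q:ℝ) ^ a := by
    calc (2:ℝ) ≤ (q:ℝ) := by exact_mod_cast hq2
    _ ≤ (q:ℝ)^a := le_self_pow₀ (by linarith) (by omega)
  have hpow : (q:ℝ) ^ (e + a) ≤ (q:ℝ) ^ m := pow_le_pow_right₀ hq1 hea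
  -- (x+1)(Q-1) ≤ n q^e
  have h1 : ((x:ℝ) + 1) * ((q:ℝ)^m - 1) ≤ (n:ℝ) * (q:ℝ)^e := by
    have := hx
    rw [div_sub' (ne_of_gt hQ1), le_div_iff₀ hQ1] at this
    nlinarith
  have hgoal : (x:ℝ) * (q:ℝ)^a < (n:ℝ) := by
    have h2 : ((x:ℝ) + 1) * (q:ℝ)^a * ((q:ℝ)^m - 1) ≤ (n:ℝ) * (q:ℝ)^(e+a) := by
      rw [pow_add]; nlinarith [pow_pos (lt_of_lt_of_le one_pos hq1) a]
    have h3 : (x:ℝ) * (q:ℝ)^a * ((q:ℝ)^m - 1) ≤ (n:ℝ) * (q:ℝ)^m - (q:ℝ)^a * ((q:ℝ)^m - 1) := by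
      nlinarith
    have h4 : (q:ℝ)^a * ((q:ℝ)^m - 1) ≥ 2 * (n:ℝ) := by nlinarith
    have h5 : (x:ℝ) * (q:ℝ)^a * ((q:ℝ)^m - 1) < (n:ℝ) * ((q:ℝ)^m - 1) := by nlinarith [(Nat.cast_pos.mpr hn : (0:ℝ) < (n:ℝ))]
    have := (mul_lt_mul_iff_of_pos_right hQ1).mp h5
    exact this
  exact_mod_cast (by push_cast; exact hgoal : ((x * q ^ a : ℕ) : ℝ) < (n:ℝ))

theorem cyclotomic_cosets_disjoint (n q m x y : ℕ)
    (hq : IsPrimePow q) (hn : 0 < n) (hcop : Nat.Coprime n q)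
    (hm : m = orderOf (q : ZMod n))
    (hlow : q ^ (m / 2) < n) (hhigh : n ≤ q ^ m - 1)
    (hxy : x ≠ y)
    (hx1 : 1 ≤ x) (hy1 : 1 ≤ y)
    (hx2 : x ≤ min (⌊(n : ℝ) * (q : ℝ) ^ ((m + 1) / 2) / ((q : ℝ) ^ m - 1) - 1⌋₊) (n - 1))
    (hy2 : y ≤ min (⌊(n : ℝ) * (q : ℝ) ^ ((m + 1) / 2) / ((q : ℝ) ^ m - 1) - 1⌋₊) (n - 1))
    (hxq : ¬ q ∣ x) (hyq : ¬ q ∣ y) :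
    Disjoint {z : ℕ | ∃ j : ℕ, z = x * q ^ j % n} {z : ℕ | ∃ j : ℕ, z = y * q ^ j % n} := by
  haveI : NeZero n := ⟨hn.ne'⟩
  have hq2 : 2 ≤ q := hq.two_le
  have hm1 : 1 ≤ m := by
    by_contra h
    have : m = 0 := by omega
    rw [this] at hhigh; simp at hhigh; omega
  set e := (m + 1) / 2 with he
  -- extract real bounds
  have hr : (0:ℝ) ≤ (n : ℝ) * (q : ℝ) ^ e / ((q : ℝ) ^ m - 1) - 1 := by
    have hfl : 0 < ⌊(n : ℝ) * (q : ℝ) ^ e / ((q : ℝ) ^ m - 1) - 1⌋₊ :=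
      lt_of_lt_of_le hx1 (le_trans hx2 (min_le_left _ _))
    have := Nat.floor_pos.mp hfl
    linarith
  have hxr : (x : ℝ) ≤ (n : ℝ) * (q : ℝ) ^ e / ((q : ℝ) ^ m - 1) - 1 := by
    calc (x:ℝ) ≤ (⌊(n : ℝ) * (q : ℝ) ^ e / ((q : ℝ) ^ m - 1) - 1⌋₊ : ℝ) := by
          exact_mod_cast le_trans hx2 (min_le_left _ _)
    _ ≤ _ := Nat.floor_le hr
  have hyr : (y : ℝ) ≤ (n : ℝ) * (q : ℝ) ^ e / ((q : ℝ) ^ m - 1) - 1 := by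
    calc (y:ℝ) ≤ (⌊(n : ℝ) * (q : ℝ) ^ e / ((q : ℝ) ^ m - 1) - 1⌋₊ : ℝ) := by
          exact_mod_cast le_trans hy2 (min_le_left _ _)
    _ ≤ _ := Nat.floor_le hr
  have hxlt : x < n := by have := le_trans hx2 (min_le_right _ _); omega
  have hylt : y < n := by have := le_trans hy2 (min_le_right _ _); omega
  -- nat-eq from ZMod eq
  have natEq : ∀ a b : ℕ, a < n → b < n → ((a : ZMod n) = (b : ZMod n)) → a = b := by
    intro a b ha hb h
    have := congrArg ZMod.val h
    rwa [ZMod.val_cast_of_lt ha, ZMod.val_cast_of_lt hb] at this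
  have hu : (q : ZMod n) ^ m = 1 := by rw [hm]; exact pow_orderOf_eq_one _
  rw [Set.disjoint_left]
  rintro z ⟨i, hi⟩ ⟨j, hj⟩
  have hzz : ((x * q ^ i : ℕ) : ZMod n) = ((y * q ^ j : ℕ) : ZMod n) := by
    rw [← ZMod.natCast_mod (x * q ^ i) n, ← ZMod.natCast_mod (y * q ^ j) n, ← hi, ← hj]
  push_cast at hzz
  -- get b < m with x * q^b = y in ZMod n
  set t := m * j + m - j with ht
  have hjle : j ≤ m * j := Nat.le_mul_of_pos_left j (by omega)
  have hjt : j + t = m * (j + 1) := by rw [Nat.mul_succ]; omega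
  have hb0 : (x : ZMod n) * (q : ZMod n) ^ (i + t) = (y : ZMod n) := by
    rw [pow_add, ← mul_assoc, hzz, mul_assoc, ← pow_add, hjt, pow_mul, hu, one_pow, mul_one]
  set b := (i + t) % m with hb
  have hblt : b < m := Nat.mod_lt _ (by omega)
  have hxb : (x : ZMod n) * (q : ZMod n) ^ b = (y : ZMod n) := by
    rw [← hb0]
    conv_rhs => rw [← Nat.div_add_mod (i + t) m]
    rw [pow_add, pow_mul, hu, one_pow, one_mul]
  -- case analysis on b
  rcases Nat.eq_zero_or_pos b with hb0' | hb1
  · rw [hb0', pow_zero, mul_one] at hxb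
    exact hxy (natEq x y hxlt hylt hxb)
  · by_cases hble : b ≤ m - e
    · -- x * q^b = y in ℕ
      have hlt : x * q ^ b < n := key_lt n q m e x b hq2 hn hb1 (by omega) hhigh hxr
      have : x * q ^ b = y := by
        apply natEq _ _ hlt hylt
        push_cast; exact hxb
      have hdvd : q ∣ x * q ^ b := dvd_mul_of_dvd_right (dvd_pow_self q (by omega)) x
      rw [this] at hdvd
      exact hyq hdvd
    · -- symmetric case: y * q^(m-b) = x
      set c := m - b with hc
      have hc1 : 1 ≤ c := by omega
      have hcle : e + c ≤ m := by omega
      have hyc : (y : ZMod n) * (q : ZMod n) ^ c = (x : ZMod n) := by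
        rw [← hxb, mul_assoc, ← pow_add]
        have : b + c = m := by omega
        rw [this, hu, mul_one]
      have hlt : y * q ^ c < n := key_lt n q m e y c hq2 hn hc1 hcle hhigh hyr
      have heq : y * q ^ c = x := by
        apply natEq _ _ hlt hxlt
        push_cast; exact hyc
      have hdvd : q ∣ y * q ^ c := dvd_mul_of_dvd_right (dvd_pow_self q (by omega)) y
      rw [heq] at hdvd
      exact hxq hdvd
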